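/- arXiv:1506.00811 — 2 statements merged into one kernel-verified Lean document; each statement's English description precedes it below -/
import Mathlib

section
/- Let K be a subfield of the field ℚ̄ of algebraic numbers and let n ∈ ℕ. Then n ∈ 𝔇_K(n), the minimum of 𝔇_K(n) equals c_K(n) and lies in 𝔇_K(n), 𝔇_K(n) = c_K(n)·ℕ (the set of positive multiples of c_K(n)), and c_K(n) divides n. -/
noncomputable section

/-- The primitive `n`-th root of unity `exp(2πi/n)` in `ℂ`. -/
def zetaC (n : ℕ) : ℂ := Complex.exp (2 * Real.pi * Complex.I / n)

/-- The `n`-th cyclotomic field `E_n = ℚ(ζ_n)`, as an intermediate field of `ℂ/ℚ`. -/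
def Ecyc (n : ℕ) : IntermediateField ℚ ℂ := IntermediateField.adjoin ℚ {zetaC n}

/-- Writing `n = 2^j * m` with `m` odd, `E_n^+ = ℚ(ζ_{2^j} + ζ_{2^j}⁻¹)·E_m` if `j ≥ 3`,
and `E_n^+ = E_m` if `j ≤ 2`. -/
def EcycP (n : ℕ) : IntermediateField ℚ ℂ :=
  if 3 ≤ n.factorization 2 then
    IntermediateField.adjoin ℚ
        {zetaC (2 ^ n.factorization 2) + (zetaC (2 ^ n.factorization 2))⁻¹} ⊔
      Ecyc (n / 2 ^ n.factorization 2)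
  else Ecyc (n / 2 ^ n.factorization 2)

/-- Writing `n = 2^j * m` with `m` odd, `E_n^- = ℚ(ζ_{2^j} - ζ_{2^j}⁻¹)·E_m` if `j ≥ 3`,
and `E_n^- = E_m` if `j ≤ 2`. -/
def EcycM (n : ℕ) : IntermediateField ℚ ℂ :=
  if 3 ≤ n.factorization 2 then
    IntermediateField.adjoin ℚ
        {zetaC (2 ^ n.factorization 2) - (zetaC (2 ^ n.factorization 2))⁻¹} ⊔
      Ecyc (n / 2 ^ n.factorization 2)
  else Ecyc (n / 2 ^ n.factorization 2)

/-- The gcd of a set of natural numbers (`0` if the set is empty), realised as the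
largest common divisor. -/
def setGcd (S : Set ℕ) : ℕ := sSup {g : ℕ | ∀ s ∈ S, g ∣ s}

/-- `𝔇_K(n) = {d ∈ ℕ : K ∩ E_n ⊆ E_d}` (with `d` positive). -/
def Dset (K : IntermediateField ℚ ℂ) (n : ℕ) : Set ℕ :=
  {d | 0 < d ∧ K ⊓ Ecyc n ≤ Ecyc d}

/-- `𝔇_K^+(n) = {d ∈ ℕ : K ∩ E_n ⊆ E_d^+}` (with `d` positive). -/
def DsetP (K : IntermediateField ℚ ℂ) (n : ℕ) : Set ℕ :=
  {d | 0 < d ∧ K ⊓ Ecyc n ≤ EcycP d}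

/-- `𝔇_K^-(n) = {d ∈ ℕ : K ∩ E_n ⊆ E_d^-}` (with `d` positive). -/
def DsetM (K : IntermediateField ℚ ℂ) (n : ℕ) : Set ℕ :=
  {d | 0 < d ∧ K ⊓ Ecyc n ≤ EcycM d}

/-- `c_K(n) = gcd 𝔇_K(n)`. -/
def cK (K : IntermediateField ℚ ℂ) (n : ℕ) : ℕ := setGcd (Dset K n)

/-- `c_K^+(n) = gcd 𝔇_K^+(n)`. -/
def cKP (K : IntermediateField ℚ ℂ) (n : ℕ) : ℕ := setGcd (DsetP K n)

/-- `c_K^-(n) = gcd 𝔇_K^-(n)`. -/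
def cKM (K : IntermediateField ℚ ℂ) (n : ℕ) : ℕ := setGcd (DsetM K n)

/-- The compositum `F·A`, viewed as a field extension of `A`. -/
def relField (F A : IntermediateField ℚ ℂ) : IntermediateField ↥A ℂ :=
  IntermediateField.extendScalars (le_sup_right : A ≤ F ⊔ A)

/-- The relative degree `[F·A : A]`. -/
def relDeg (F A : IntermediateField ℚ ℂ) : ℕ := Module.finrank ↥A ↥(relField F A)

/-- The Galois group `Gal(F·A / A)`. -/
abbrev RelGal (F A : IntermediateField ℚ ℂ) :=
  ↥(relField F A) ≃ₐ[↥A] ↥(relField F A)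

end

open IntermediateField

lemma zetaC_prim {n : ℕ} (hn : 0 < n) : IsPrimitiveRoot (zetaC n) n :=
  Complex.isPrimitiveRoot_exp n hn.ne'

lemma zetaC_pow_div {d n : ℕ} (hd : 0 < d) (hn : 0 < n) (hdn : d ∣ n) :
    zetaC n ^ (n / d) = zetaC d := by
  rw [zetaC, zetaC, ← Complex.exp_nat_mul]
  congr 1
  have h0 : (d : ℂ) ≠ 0 := Nat.cast_ne_zero.2 hd.ne'
  have h1 : (n : ℂ) ≠ 0 := Nat.cast_ne_zero.2 hn.ne'
  rw [Nat.cast_div hdn h0]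
  field_simp

lemma zetaC_mem {n : ℕ} : zetaC n ∈ Ecyc n :=
  IntermediateField.subset_adjoin ℚ _ rfl

lemma Ecyc_le_of_dvd {d n : ℕ} (hd : 0 < d) (hn : 0 < n) (h : d ∣ n) : Ecyc d ≤ Ecyc n := by
  rw [Ecyc, IntermediateField.adjoin_le_iff, Set.singleton_subset_iff]
  rw [← zetaC_pow_div hd hn h]
  exact pow_mem zetaC_mem _

lemma coprime_of_modEq {m x y : ℕ} (h : Nat.ModEq m x y) (hy : Nat.Coprime y m) :
    Nat.Coprime x m := by
  have hg : Nat.gcd m x = Nat.gcd m y := by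
    rw [Nat.gcd_rec m x, Nat.gcd_rec m y, h]
  have := hy
  unfold Nat.Coprime at *
  rw [Nat.gcd_comm] at this ⊢
  rw [hg]; exact this

lemma fix_of_fix_gen {L : Type*} [Field L] [Algebra ℚ L] (gen : L) (τ : L ≃ₐ[ℚ] L)
    (h : τ gen = gen) : ∀ y ∈ IntermediateField.adjoin ℚ {gen}, τ y = y := by
  intro y hy
  induction hy using IntermediateField.adjoin_induction with
  | mem x hx => rw [Set.mem_singleton_iff] at hx; rw [hx, h]
  | algebraMap x => exact τ.commutes x
  | add x y _ _ hx hy => rw [map_add, hx, hy]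
  | inv x _ hx => rw [map_inv₀, hx]
  | mul x y _ _ hx hy => rw [map_mul, hx, hy]

lemma Ecyc_inf_le {a b : ℕ} (ha : 0 < a) (hb : 0 < b) :
    Ecyc a ⊓ Ecyc b ≤ Ecyc (Nat.gcd a b) := by
  set g := Nat.gcd a b with hgdef
  set N := Nat.lcm a b with hNdef
  have hg0 : 0 < g := Nat.gcd_pos_of_pos_left _ ha
  have hN0 : 0 < N := Nat.lcm_pos ha hb
  haveI : NeZero N := ⟨hN0.ne'⟩
  have haN : a ∣ N := Nat.dvd_lcm_left a b
  have hbN : b ∣ N := Nat.dvd_lcm_right a b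
  have hga : g ∣ a := Nat.gcd_dvd_left a b
  have hgb : g ∣ b := Nat.gcd_dvd_right a b
  have hgN : g ∣ N := hga.trans haN
  have prim : IsPrimitiveRoot (zetaC N) N := zetaC_prim hN0
  set Np : ℕ+ := ⟨N, hN0⟩ with hNp
  have hsub : (Ecyc N).toSubalgebra = Algebra.adjoin ℚ {zetaC N} := by
    apply IntermediateField.adjoin_toSubalgebra_of_isAlgebraic
    intro x hx
    rw [Set.mem_singleton_iff] at hx
    subst hx
    refine ⟨Polynomial.X ^ N - 1, ?_, ?_⟩
    · exact (Polynomial.monic_X_pow_sub_C (1:ℚ) hN0.ne').ne_zero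
    · simp [prim.pow_eq_one]
  haveI : IsCyclotomicExtension {N} ℚ (Ecyc N) := by
    have base := prim.adjoin_isCyclotomicExtension ℚ (n := N)
    exact IsCyclotomicExtension.equiv _ ℚ _ (Subalgebra.equivOfEq _ _ hsub.symm)
  haveI : FiniteDimensional ℚ (Ecyc N) := IsCyclotomicExtension.finiteDimensional {N} ℚ _
  haveI : IsGalois ℚ (Ecyc N) := IsCyclotomicExtension.isGalois {N} ℚ (Ecyc N)
  have irr : Irreducible (Polynomial.cyclotomic N ℚ) := Polynomial.cyclotomic.irreducible_rat hN0
  set L := Ecyc N with hLdef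
  set ζ : L := ⟨zetaC N, zetaC_mem⟩ with hζdef
  have primL : IsPrimitiveRoot ζ N := by
    rw [← IsPrimitiveRoot.coe_submonoidClass_iff]
    exact prim
  have hz : zetaC N ≠ 0 := prim.ne_zero hN0.ne'
  have hpowiffC : ∀ i j : ℕ, (zetaC N) ^ i = (zetaC N) ^ j ↔ i ≡ j [MOD N] := by
    intro i j
    constructor
    · intro h
      have h1 : zetaC N ^ ((j : ℤ) - i) = 1 := by
        rw [zpow_sub₀ hz, zpow_natCast, zpow_natCast, h, div_self (pow_ne_zero _ hz)]
      exact (Nat.modEq_iff_dvd).mpr ((prim.zpow_eq_one_iff_dvd _).mp h1)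
    · intro h
      have hd := (Nat.modEq_iff_dvd).mp h
      have h1 : zetaC N ^ ((j : ℤ) - i) = 1 := (prim.zpow_eq_one_iff_dvd _).mpr hd
      have h2 : zetaC N ^ (j : ℤ) = zetaC N ^ (i : ℤ) := by
        rw [show (j : ℤ) = ((j : ℤ) - i) + i by ring, zpow_add₀ hz, h1, one_mul]
      rw [← zpow_natCast, ← zpow_natCast, h2]
  have hpowiff : ∀ i j : ℕ, ζ ^ i = ζ ^ j ↔ i ≡ j [MOD N] := by
    intro i j
    rw [← hpowiffC i j]
    constructor
    · intro h
      have h3 := congrArg L.val h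
      simpa [map_pow] using h3
    · intro h
      apply Subtype.ext
      simpa using h
  have hmap : ∀ d : ℕ, 0 < d → d ∣ N →
      (IntermediateField.adjoin ℚ {ζ ^ (N / d)}).map L.val = Ecyc d := by
    intro d hd hdN
    erw [IntermediateField.adjoin_map, Set.image_singleton]
    have : L.val (ζ ^ (N / d)) = zetaC d := by
      rw [map_pow]
      exact zetaC_pow_div hd hN0 hdN
    rw [this, Ecyc]
  have hmem : ∀ (d : ℕ), 0 < d → d ∣ N → ∀ x : ℂ,
      (x ∈ Ecyc d ↔ ∃ y ∈ IntermediateField.adjoin ℚ {ζ ^ (N / d)}, L.val y = x) := by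
    intro d hd hdN x
    rw [← hmap d hd hdN, ← SetLike.mem_coe]
    erw [IntermediateField.coe_map, Set.mem_image]
    exact Iff.rfl
  intro x hx
  have hxa : x ∈ Ecyc a := hx.1
  have hxb : x ∈ Ecyc b := hx.2
  obtain ⟨ya, hya, hyax⟩ := (hmem a ha haN x).1 hxa
  obtain ⟨yb, hyb, hybx⟩ := (hmem b hb hbN x).1 hxb
  have hyy : yb = ya := Subtype.ext (by
    have h1 : (ya : ℂ) = x := hyax
    have h2 : (yb : ℂ) = x := hybx
    rw [h1, h2])
  rw [hyy] at hyb
  rw [hmem g hg0 hgN x]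
  refine ⟨ya, ?_, hyax⟩
  rw [← IsGalois.fixedField_fixingSubgroup (IntermediateField.adjoin ℚ {ζ ^ (N / g)})]
  rintro ⟨σ, hσ⟩
  show σ ya = ya
  rw [IntermediateField.mem_fixingSubgroup_iff] at hσ
  have hσgen : σ (ζ ^ (N / g)) = ζ ^ (N / g) :=
    hσ _ (IntermediateField.subset_adjoin ℚ _ rfl)
  have hσζpow : (σ ζ) ^ N = 1 := by rw [← map_pow, primL.pow_eq_one, map_one]
  obtain ⟨u, hult, hu⟩ := primL.eq_pow_of_pow_eq_one hσζpow
  have primσ : IsPrimitiveRoot (σ ζ) N := primL.map_of_injective σ.injective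
  have hucop : u.Coprime N := (primL.pow_iff_coprime hN0 u).1 (hu ▸ primσ)
  have hug : u ≡ 1 [MOD g] := by
    have hmodN : (N / g) * u ≡ (N / g) * 1 [MOD N] := by
      have he : ζ ^ ((N / g) * u) = ζ ^ ((N / g) * 1) := by
        rw [mul_one, mul_comm, pow_mul, hu, ← map_pow, hσgen]
      exact (hpowiff _ _).1 he
    have hNg0 : 0 < N / g := Nat.div_pos (Nat.le_of_dvd hN0 hgN) hg0
    have hNfac : N = (N / g) * g := (Nat.div_mul_cancel hgN).symm
    have h1 : (N / g) * u % ((N / g) * g) = (N / g) * 1 % ((N / g) * g) := by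
      rw [← hNfac]; exact hmodN
    rw [Nat.mul_mod_mul_left, Nat.mul_mod_mul_left] at h1
    exact Nat.eq_of_mul_eq_mul_left hNg0 h1
  obtain ⟨v, hva, hvb⟩ := Nat.chineseRemainder' (hgdef ▸ hug : u ≡ 1 [MOD Nat.gcd a b])
  have hvacop : v.Coprime a := coprime_of_modEq hva (Nat.Coprime.coprime_dvd_right haN hucop)
  have hvbcop : v.Coprime b := coprime_of_modEq hvb (Nat.coprime_one_left b)
  have hvN : v.Coprime N :=
    Nat.Coprime.coprime_dvd_right (Nat.lcm_dvd_mul a b) (hvacop.mul_right hvbcop)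
  -- construct τ with τ ζ = ζ ^ (v % N)
  have hAinj : Function.Injective (primL.autToPow ℚ) := primL.autToPow_injective (n := N) ℚ
  have hcard : Fintype.card (L ≃ₐ[ℚ] L) = Fintype.card (ZMod N)ˣ := by
    rw [← Nat.card_eq_fintype_card, IsGalois.card_aut_eq_finrank, IsCyclotomicExtension.finrank (n := N) L irr,
      ZMod.card_units_eq_totient]
  have hAbij : Function.Bijective (primL.autToPow ℚ) :=
    (Fintype.bijective_iff_injective_and_card _).2 ⟨hAinj, hcard⟩
  obtain ⟨τ, hτ⟩ := hAbij.2 (ZMod.unitOfCoprime v hvN)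
  have hτζ : τ ζ = ζ ^ (v % N) := by
    have hs := primL.autToPow_spec ℚ τ
    rw [hτ] at hs
    rw [← hs]
    congr 1
    rw [ZMod.coe_unitOfCoprime, ZMod.val_natCast]
  -- τ fixes the generator of F_b
  have hτgenb : τ (ζ ^ (N / b)) = ζ ^ (N / b) := by
    rw [map_pow, hτζ, ← pow_mul]
    rw [hpowiff]
    calc (v % N) * (N / b) ≡ v * (N / b) [MOD N] := (Nat.mod_modEq v N).mul_right _
      _ ≡ 1 * (N / b) [MOD N] := by
          have h1 : v * (N / b) ≡ 1 * (N / b) [MOD b * (N / b)] := hvb.mul_right' _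
          rwa [Nat.mul_div_cancel' hbN] at h1
      _ = N / b := one_mul _
  have hτya : τ ya = ya := fix_of_fix_gen _ τ hτgenb ya hyb
  have heq : σ (ζ ^ (N / a)) = τ (ζ ^ (N / a)) := by
    rw [map_pow, map_pow, ← hu, hτζ, ← pow_mul, ← pow_mul, hpowiff]
    calc u * (N / a) ≡ v * (N / a) [MOD N] := by
          have h1 : v * (N / a) ≡ u * (N / a) [MOD a * (N / a)] := hva.mul_right' _
          rw [Nat.mul_div_cancel' haN] at h1
          exact h1.symm
      _ ≡ (v % N) * (N / a) [MOD N] := ((Nat.mod_modEq v N).symm).mul_right _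
  have hρgen : (σ.trans τ.symm) (ζ ^ (N / a)) = ζ ^ (N / a) := by
    rw [AlgEquiv.trans_apply, heq, AlgEquiv.symm_apply_apply]
  have hρya : (σ.trans τ.symm) ya = ya := fix_of_fix_gen _ _ hρgen ya hya
  have hfin : τ ((σ.trans τ.symm) ya) = σ ya := by
    rw [AlgEquiv.trans_apply, AlgEquiv.apply_symm_apply]
  rw [← hfin, hρya, hτya]

/-- For a subfield `K` of the algebraic numbers and `n ∈ ℕ`: `n ∈ 𝔇_K(n)`,
`c_K(n)` is the minimum of `𝔇_K(n)` (in particular lies in it), `𝔇_K(n)` is the set of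
positive multiples of `c_K(n)`, and `c_K(n) ∣ n`. -/
theorem stmt_7 (K : IntermediateField ℚ ℂ) (hK : ∀ x ∈ K, IsAlgebraic ℚ x)
    (n : ℕ) (hn : 0 < n) :
    n ∈ Dset K n ∧
    cK K n ∈ Dset K n ∧
    IsLeast (Dset K n) (cK K n) ∧
    Dset K n = {d : ℕ | ∃ k : ℕ, 0 < k ∧ d = cK K n * k} ∧
    cK K n ∣ n := by
  have hnD : n ∈ Dset K n := ⟨hn, inf_le_right⟩
  have hgcd : ∀ d ∈ Dset K n, ∀ e ∈ Dset K n, Nat.gcd d e ∈ Dset K n := by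
    intro d hd e he
    exact ⟨Nat.gcd_pos_of_pos_left _ hd.1,
      le_trans (le_inf hd.2 he.2) (Ecyc_inf_le hd.1 he.1)⟩
  have hpos : ∀ d ∈ Dset K n, 0 < d := fun d hd => hd.1
  have hup : ∀ d ∈ Dset K n, ∀ e : ℕ, 0 < e → d ∣ e → e ∈ Dset K n := by
    intro d hd e he hde
    exact ⟨he, hd.2.trans (Ecyc_le_of_dvd hd.1 he hde)⟩
  have hne : (Dset K n).Nonempty := ⟨n, hnD⟩
  set c0 := sInf (Dset K n) with hc0
  have hc0D : c0 ∈ Dset K n := Nat.sInf_mem hne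
  have hc0pos : 0 < c0 := hpos _ hc0D
  have hdvd : ∀ d ∈ Dset K n, c0 ∣ d := by
    intro d hd
    have hg : Nat.gcd c0 d ∈ Dset K n := hgcd _ hc0D _ hd
    have hle : c0 ≤ Nat.gcd c0 d := Nat.sInf_le hg
    have hge : Nat.gcd c0 d ≤ c0 := Nat.le_of_dvd hc0pos (Nat.gcd_dvd_left _ _)
    have heq : Nat.gcd c0 d = c0 := le_antisymm hge hle
    rw [← heq]; exact Nat.gcd_dvd_right _ _
  have hcK : cK K n = c0 := by
    rw [cK, setGcd]
    apply IsGreatest.csSup_eq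
    constructor
    · exact fun s hs => hdvd s hs
    · intro gdiv hgdiv
      exact Nat.le_of_dvd hc0pos (hgdiv c0 hc0D)
  rw [hcK]
  refine ⟨hnD, hc0D, ⟨hc0D, fun d hd => Nat.le_of_dvd (hpos d hd) (hdvd d hd)⟩, ?_,
    hdvd n hnD⟩
  ext d
  constructor
  · intro hd
    obtain ⟨k, hk⟩ := hdvd d hd
    refine ⟨k, ?_, hk⟩
    rcases Nat.eq_zero_or_pos k with h0 | h
    · exfalso; rw [h0, mul_zero] at hk; exact absurd hk (hpos d hd).ne'
    · exact h
  · rintro ⟨k, hk0, rfl⟩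
    exact hup c0 hc0D _ (mul_pos hc0pos hk0) ⟨k, rfl⟩
end

section
/- Let K be a subfield of the field ℚ̄ of algebraic numbers and let n ∈ ℕ. If 𝔇_K^+(n) ≠ ∅, then c_K^+(n) ∈ 𝔇_K^+(n), c_K^+(n) = min 𝔇_K^+(n), 𝔇_K^+(n) = c_K^+(n)·ℕ (the set of positive multiples of c_K^+(n)), and c_K^+(n) divides n. -/
section StmtAux
open IntermediateField Polynomial




lemma zetaC_isPrimitiveRoot {n : ℕ} (hn : n ≠ 0) : IsPrimitiveRoot (zetaC n) n :=
  Complex.isPrimitiveRoot_exp n hn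

lemma zetaC_ne_zero (n : ℕ) : zetaC n ≠ 0 := Complex.exp_ne_zero _

lemma zetaC_pow_eq {d l : ℕ} (hd : d ≠ 0) (hdl : d ∣ l) (hl : l ≠ 0) :
    zetaC l ^ (l / d) = zetaC d := by
  rw [zetaC, zetaC, ← Complex.exp_nat_mul]
  congr 1
  obtain ⟨k, rfl⟩ := hdl
  have hk : k ≠ 0 := by rintro rfl; simp at hl
  rw [Nat.mul_div_cancel_left _ (Nat.pos_of_ne_zero hd)]
  have h1 : (d : ℂ) ≠ 0 := Nat.cast_ne_zero.2 hd
  have h2 : (k : ℂ) ≠ 0 := Nat.cast_ne_zero.2 hk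
  push_cast
  field_simp

lemma zetaC_mem_s8 {d l : ℕ} (hd : d ≠ 0) (hl : l ≠ 0) (hdl : d ∣ l) : zetaC d ∈ Ecyc l := by
  rw [← zetaC_pow_eq hd hdl hl]
  have h : zetaC l ∈ Ecyc l := IntermediateField.subset_adjoin ℚ {zetaC l} (Set.mem_singleton _)
  exact pow_mem h _

lemma Ecyc_mono {d l : ℕ} (hd : d ≠ 0) (hl : l ≠ 0) (hdl : d ∣ l) : Ecyc d ≤ Ecyc l := by
  rw [Ecyc, adjoin_le_iff]
  rintro x rfl
  exact zetaC_mem_s8 hd hl hdl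

lemma zetaC_sq (j : ℕ) : zetaC (2 ^ (j + 1)) ^ 2 = zetaC (2 ^ j) := by
  have := zetaC_pow_eq (d := 2 ^ j) (l := 2 ^ (j + 1)) (by positivity)
    (pow_dvd_pow 2 (Nat.le_succ j)) (by positivity)
  rwa [pow_succ, Nat.mul_div_cancel_left _ (by positivity)] at this

lemma c_rec (j : ℕ) : zetaC (2 ^ j) + (zetaC (2 ^ j))⁻¹ =
    (zetaC (2 ^ (j + 1)) + (zetaC (2 ^ (j + 1)))⁻¹) ^ 2 - 2 := by
  have h := zetaC_sq j
  have h0 : zetaC (2 ^ (j + 1)) ≠ 0 := zetaC_ne_zero _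
  have h0' : zetaC (2 ^ j) ≠ 0 := zetaC_ne_zero _
  rw [← h]
  field_simp
  ring




lemma cos_mem_tower {j j' : ℕ} (h : j ≤ j') :
    zetaC (2 ^ j) + (zetaC (2 ^ j))⁻¹ ∈
      IntermediateField.adjoin ℚ {zetaC (2 ^ j') + (zetaC (2 ^ j'))⁻¹} := by
  induction j', h using Nat.le_induction with
  | base => exact IntermediateField.subset_adjoin ℚ _ (Set.mem_singleton _)
  | succ k hk ih =>
    have hmem : zetaC (2 ^ k) + (zetaC (2 ^ k))⁻¹ ∈
        IntermediateField.adjoin ℚ {zetaC (2 ^ (k+1)) + (zetaC (2 ^ (k+1)))⁻¹} := by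
      rw [c_rec k]
      have h1 : zetaC (2 ^ (k+1)) + (zetaC (2 ^ (k+1)))⁻¹ ∈
          IntermediateField.adjoin ℚ {zetaC (2 ^ (k+1)) + (zetaC (2 ^ (k+1)))⁻¹} :=
        IntermediateField.subset_adjoin ℚ _ (Set.mem_singleton _)
      exact sub_mem (pow_mem h1 2) (ofNat_mem _ 2)
    have hle : IntermediateField.adjoin ℚ {zetaC (2 ^ k) + (zetaC (2 ^ k))⁻¹} ≤
        IntermediateField.adjoin ℚ {zetaC (2 ^ (k+1)) + (zetaC (2 ^ (k+1)))⁻¹} := by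
      rw [adjoin_le_iff]; rintro x rfl; exact hmem
    exact hle ih

lemma ordProj_ne (d : ℕ) : (2 : ℕ) ^ d.factorization 2 ≠ 0 := by positivity

lemma ordCompl_ne {d : ℕ} (hd : d ≠ 0) : d / 2 ^ d.factorization 2 ≠ 0 :=
  (Nat.ordCompl_pos 2 hd).ne'

lemma c_mem_Ecyc {j d : ℕ} (hd : d ≠ 0) (hj : 2 ^ j ∣ d) :
    zetaC (2 ^ j) + (zetaC (2 ^ j))⁻¹ ∈ Ecyc d := by
  have h := zetaC_mem_s8 (d := 2 ^ j) (by positivity) hd hj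
  exact add_mem h (inv_mem h)

lemma EcycP_le_Ecyc {d : ℕ} (hd : d ≠ 0) : EcycP d ≤ Ecyc d := by
  have h1 : Ecyc (d / 2 ^ d.factorization 2) ≤ Ecyc d :=
    Ecyc_mono (ordCompl_ne hd) hd (Nat.ordCompl_dvd d 2)
  rw [EcycP]
  split
  · refine sup_le ?_ h1
    rw [adjoin_le_iff]; rintro x rfl
    exact c_mem_Ecyc hd (Nat.ordProj_dvd d 2)
  · exact h1

lemma EcycP_mono {d e : ℕ} (hd : d ≠ 0) (he : e ≠ 0) (hde : d ∣ e) : EcycP d ≤ EcycP e := by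
  have hj : d.factorization 2 ≤ e.factorization 2 := by
    have := (Nat.factorization_le_iff_dvd hd he).2 hde
    exact this 2
  have hm : d / 2 ^ d.factorization 2 ∣ e / 2 ^ e.factorization 2 :=
    Nat.ordCompl_dvd_ordCompl_of_dvd hde 2
  have hEm : Ecyc (d / 2 ^ d.factorization 2) ≤ Ecyc (e / 2 ^ e.factorization 2) :=
    Ecyc_mono (ordCompl_ne hd) (ordCompl_ne he) hm
  rw [EcycP, EcycP]
  by_cases h3 : 3 ≤ d.factorization 2
  · have h3' : 3 ≤ e.factorization 2 := le_trans h3 hj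
    rw [if_pos h3, if_pos h3']
    refine sup_le ?_ (le_trans hEm le_sup_right)
    rw [adjoin_le_iff]; rintro x rfl
    exact SetLike.le_def.1 le_sup_left (cos_mem_tower hj)
  · rw [if_neg h3]
    split
    · exact le_trans hEm le_sup_right
    · exact hEm




lemma zetaC_mem_self (l : ℕ) : zetaC l ∈ Ecyc l :=
  IntermediateField.subset_adjoin ℚ {zetaC l} (Set.mem_singleton _)

noncomputable def zL (l : ℕ) : ↥(Ecyc l) := ⟨zetaC l, zetaC_mem_self l⟩

lemma zL_prim {l : ℕ} (hl : l ≠ 0) : IsPrimitiveRoot (zL l) l := by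
  exact IsPrimitiveRoot.coe_submonoidClass_iff.mp (zetaC_isPrimitiveRoot hl)

lemma zetaC_isIntegral {l : ℕ} (hl : l ≠ 0) : IsIntegral ℚ (zetaC l) := by
  refine ⟨X ^ l - C 1, monic_X_pow_sub_C 1 hl, ?_⟩
  simp only [eval₂_sub, eval₂_pow, eval₂_X, eval₂_C]
  rw [(zetaC_isPrimitiveRoot hl).pow_eq_one]
  simp

lemma Ecyc_isCyclo {l : ℕ} (hl : l ≠ 0) :
    IsCyclotomicExtension {l} ℚ ↥(Ecyc l) := by
  haveI : NeZero l := ⟨hl⟩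
  have h1 : IsCyclotomicExtension {l} ℚ
      (Algebra.adjoin ℚ {zetaC l}) :=
    IsPrimitiveRoot.adjoin_isCyclotomicExtension ℚ
      (zetaC_isPrimitiveRoot hl : IsPrimitiveRoot (zetaC l)
        l)
  have hEq : Algebra.adjoin ℚ {zetaC l} = (Ecyc l).toSubalgebra :=
    (IntermediateField.adjoin_simple_toSubalgebra_of_isAlgebraic (zetaC_isIntegral hl).isAlgebraic).symm
  exact IsCyclotomicExtension.equiv _ _ _ (Subalgebra.equivOfEq _ _ hEq)

lemma fix_adjoin {F E : Type*} [Field F] [Field E] [Algebra F E] {σ : E ≃ₐ[F] E} {S : Set E}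
    (h : ∀ s ∈ S, σ s = s) {x : E} (hx : x ∈ IntermediateField.adjoin F S) : σ x = x := by
  have h1 : IntermediateField.adjoin F S ≤
      IntermediateField.fixedField (Subgroup.zpowers σ) := by
    rw [IntermediateField.adjoin_le_iff]
    intro s hs
    have hst : Subgroup.zpowers σ ≤ MulAction.stabilizer (E ≃ₐ[F] E) s :=
      Subgroup.zpowers_le.2 (h s hs)
    intro g
    exact hst g.2
  exact h1 hx ⟨σ, Subgroup.mem_zpowers σ⟩

lemma prim_pow_eq_pow_iff {M₀ : Type*} [CommMonoidWithZero M₀] {w : M₀} {u : ℕ}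
    (hu : u ≠ 0) (hw : IsPrimitiveRoot w u) (s t : ℕ) :
    w ^ s = w ^ t ↔ s ≡ t [MOD u] := by
  have hv := hw.isUnit_unit (hu)
  have hord : orderOf (hw.isUnit (hu)).unit = u := hv.eq_orderOf.symm
  rw [← hord]
  constructor
  · intro h
    apply pow_eq_pow_iff_modEq.1
    ext
    simpa [(hw.isUnit (hu)).unit_spec] using h
  · intro h
    have := (pow_eq_pow_iff_modEq (x := (hw.isUnit (hu)).unit)).2 h
    have h2 := congrArg (Units.val) this
    simpa [(hw.isUnit (hu)).unit_spec] using h2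


lemma coprime_of_modEq_s8 {a b n : ℕ} (h : a ≡ b [MOD n]) (hb : b.Coprime n) : a.Coprime n := by
  have h1 : Nat.gcd n a = Nat.gcd n b := by
    rw [Nat.gcd_rec n a, Nat.gcd_rec n b, h]
  unfold Nat.Coprime
  rw [Nat.gcd_comm, h1, Nat.gcd_comm]
  exact hb

lemma modEq_lcm {a b u v : ℕ} (h1 : a ≡ b [MOD u]) (h2 : a ≡ b [MOD v]) :
    a ≡ b [MOD Nat.lcm u v] := by
  rw [Nat.modEq_iff_dvd] at h1 h2 ⊢
  rw [Int.natCast_dvd] at h1 h2 ⊢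
  exact Nat.lcm_dvd h1 h2

lemma sq_pred_modEq {P : ℕ} (hP : P ≠ 0) : (P - 1) * (P - 1) ≡ 1 [MOD P] := by
  have h1 : 1 ≤ P := Nat.one_le_iff_ne_zero.2 hP
  rw [Nat.modEq_iff_dvd]
  have : ((P - 1 : ℕ) : ℤ) = (P : ℤ) - 1 := by
    push_cast [h1]; ring
  rw [Nat.cast_mul, this]
  exact ⟨2 - P, by ring⟩

lemma pow_sub_one_modEq {j j' : ℕ} (h : j ≤ j') :
    2 ^ j' - 1 ≡ 2 ^ j - 1 [MOD 2 ^ j] := by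
  symm
  have h1 : (1:ℕ) ≤ 2 ^ j := Nat.one_le_two_pow
  have h2 : (2:ℕ) ^ j ≤ 2 ^ j' := Nat.pow_le_pow_right (by norm_num) h
  rw [Nat.modEq_iff_dvd' (by omega)]
  have : 2 ^ j' - 1 - (2 ^ j - 1) = 2 ^ j' - 2 ^ j := by omega
  rw [this]
  exact Nat.dvd_sub (pow_dvd_pow 2 h) dvd_rfl

/-- Core CRT splitting: a unit `t` mod `lcm u v` that is `1` mod `gcd u v` splits as a
product of something `1` mod `u` and something `1` mod `v`. -/
lemma nat_split {u v : ℕ} (hu : u ≠ 0) (hv : v ≠ 0) (t : ℕ) (hco : t.Coprime (Nat.lcm u v))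
    (h1 : t ≡ 1 [MOD Nat.gcd u v]) :
    ∃ b c : ℕ, b.Coprime (Nat.lcm u v) ∧ c.Coprime (Nat.lcm u v) ∧
      b * c ≡ t [MOD Nat.lcm u v] ∧ b ≡ 1 [MOD u] ∧ c ≡ 1 [MOD v] := by
  have hcu : t.Coprime u := hco.coprime_dvd_right (Nat.dvd_lcm_left u v)
  have hcv : t.Coprime v := hco.coprime_dvd_right (Nat.dvd_lcm_right u v)
  obtain ⟨b, hb1, hb2⟩ := Nat.chineseRemainder' (h1.symm : (1:ℕ) ≡ t [MOD Nat.gcd u v])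
  obtain ⟨c, hc1, hc2⟩ := Nat.chineseRemainder' (h1 : t ≡ 1 [MOD Nat.gcd u v])
  have hbu : b.Coprime u := coprime_of_modEq_s8 hb1 (Nat.coprime_one_left u)
  have hbv : b.Coprime v := coprime_of_modEq_s8 hb2 hcv
  have hcu' : c.Coprime u := coprime_of_modEq_s8 hc1 hcu
  have hcv' : c.Coprime v := coprime_of_modEq_s8 hc2 (Nat.coprime_one_left v)
  refine ⟨b, c, ?_, ?_, ?_, hb1, hc2⟩
  · exact (hbu.mul_right hbv).coprime_dvd_right (Nat.lcm_dvd_mul u v)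
  · exact (hcu'.mul_right hcv').coprime_dvd_right (Nat.lcm_dvd_mul u v)
  · refine modEq_lcm ?_ ?_
    · calc b * c ≡ 1 * t [MOD u] := Nat.ModEq.mul hb1 hc1
        _ = t := one_mul t
    · calc b * c ≡ t * 1 [MOD v] := Nat.ModEq.mul hb2 hc2
        _ = t := mul_one t


/-- combine congruence mod odd part and mod 2-part into congruence mod `n`. -/
lemma modEq_of_parts {a b n : ℕ} (h2 : a ≡ b [MOD 2 ^ n.factorization 2])
    (hm : a ≡ b [MOD n / 2 ^ n.factorization 2]) (hn : n ≠ 0) : a ≡ b [MOD n] := by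
  have hco : Nat.Coprime (2 ^ n.factorization 2) (n / 2 ^ n.factorization 2) :=
    Nat.Coprime.pow_left _ (Nat.coprime_ordCompl Nat.prime_two hn)
  have h := modEq_lcm h2 hm
  rwa [Nat.Coprime.lcm_eq_mul hco, Nat.ordProj_mul_ordCompl_eq_self n 2] at h

lemma arith {d e : ℕ} (hd : d ≠ 0) (he : e ≠ 0) (t : ℕ)
    (hco : t.Coprime (Nat.lcm d e))
    (h1 : t ≡ 1 [MOD Nat.gcd d e / 2 ^ (Nat.gcd d e).factorization 2])
    (h2 : t ≡ 1 [MOD 2 ^ (Nat.gcd d e).factorization 2] ∨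
          t ≡ 2 ^ (Nat.gcd d e).factorization 2 - 1 [MOD 2 ^ (Nat.gcd d e).factorization 2]) :
    ∃ b c : ℕ, b.Coprime (Nat.lcm d e) ∧ c.Coprime (Nat.lcm d e) ∧
      b * c ≡ t [MOD Nat.lcm d e] ∧
      b ≡ 1 [MOD d / 2 ^ d.factorization 2] ∧
      (b ≡ 1 [MOD 2 ^ d.factorization 2] ∨
        b ≡ 2 ^ d.factorization 2 - 1 [MOD 2 ^ d.factorization 2]) ∧
      c ≡ 1 [MOD e] := by
  set l := Nat.lcm d e with hldef
  set g := Nat.gcd d e with hgdef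
  have hl : l ≠ 0 := Nat.lcm_ne_zero hd he
  have hg : g ≠ 0 := Nat.gcd_ne_zero_left hd
  have hgl : g ∣ l := (Nat.gcd_dvd_left d e).trans (Nat.dvd_lcm_left d e)
  have hdl : d ∣ l := Nat.dvd_lcm_left d e
  rcases h2 with h2 | h2
  · -- easy case
    obtain ⟨b, c, hbco, hcco, hbc, hb, hc⟩ :=
      nat_split hd he t hco (modEq_of_parts h2 h1 hg)
    exact ⟨b, c, hbco, hcco, hbc,
      (hb.of_dvd (Nat.ordCompl_dvd d 2)),
      Or.inl (hb.of_dvd (Nat.ordProj_dvd d 2)), hc⟩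
  · -- sign-twist case
    have hone : (1:ℕ) ≤ 2 ^ l.factorization 2 := Nat.one_le_two_pow
    have hcop21 : ((2:ℕ) ^ l.factorization 2 - 1).Coprime (2 ^ l.factorization 2) := by
      have hh : (2:ℕ) ^ l.factorization 2 = (2 ^ l.factorization 2 - 1) + 1 := by omega
      rw [hh]
      simp [Nat.coprime_add_self_right]
    have hcompat : (2:ℕ) ^ l.factorization 2 - 1 ≡ 1
        [MOD Nat.gcd (2 ^ l.factorization 2) (l / 2 ^ l.factorization 2)] := by
      have : Nat.gcd (2 ^ l.factorization 2) (l / 2 ^ l.factorization 2) = 1 :=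
        Nat.Coprime.pow_left _ (Nat.coprime_ordCompl Nat.prime_two hl)
      rw [this]
      exact Nat.modEq_one
    obtain ⟨η, hη2, hηm⟩ := Nat.chineseRemainder' hcompat
    have hη2' : η ≡ 2 ^ l.factorization 2 - 1 [MOD 2 ^ l.factorization 2] := hη2
    have hηco : η.Coprime l := by
      have c1 : η.Coprime (2 ^ l.factorization 2) := coprime_of_modEq_s8 hη2' hcop21
      have c2 : η.Coprime (l / 2 ^ l.factorization 2) :=
        coprime_of_modEq_s8 hηm (Nat.coprime_one_left _)
      have := c1.mul_right c2
      rwa [Nat.ordProj_mul_ordCompl_eq_self l 2] at this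
    have hηsq : η * η ≡ 1 [MOD l] := by
      refine modEq_of_parts ?_ ?_ hl
      · calc η * η ≡ (2 ^ l.factorization 2 - 1) * (2 ^ l.factorization 2 - 1)
              [MOD 2 ^ l.factorization 2] := Nat.ModEq.mul hη2' hη2'
          _ ≡ 1 [MOD 2 ^ l.factorization 2] := sq_pred_modEq (by positivity)
      · calc η * η ≡ 1 * 1 [MOD l / 2 ^ l.factorization 2] := Nat.ModEq.mul hηm hηm
          _ = 1 := one_mul 1
    -- congruences of η modulo parts of divisors of l
    have hη_mod_pow : ∀ {k : ℕ}, k ∣ l → η ≡ 2 ^ k.factorization 2 - 1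
        [MOD 2 ^ k.factorization 2] := by
      intro k hk
      have hjk : k.factorization 2 ≤ l.factorization 2 := by
        rcases Nat.eq_zero_or_pos k with rfl | hkpos
        · simp
        · exact (Nat.factorization_le_iff_dvd hkpos.ne' hl).2 hk 2
      calc η ≡ 2 ^ l.factorization 2 - 1 [MOD 2 ^ k.factorization 2] :=
            hη2'.of_dvd (pow_dvd_pow 2 hjk)
        _ ≡ 2 ^ k.factorization 2 - 1 [MOD 2 ^ k.factorization 2] := pow_sub_one_modEq hjk
    have hη_mod_compl : ∀ {k : ℕ}, k ∣ l → η ≡ 1 [MOD k / 2 ^ k.factorization 2] :=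
      fun hk => hηm.of_dvd (Nat.ordCompl_dvd_ordCompl_of_dvd hk 2)
    -- twisted element
    have hco' : (t * η).Coprime l := hco.mul hηco
    have h1' : t * η ≡ 1 [MOD g / 2 ^ g.factorization 2] := by
      calc t * η ≡ 1 * 1 [MOD g / 2 ^ g.factorization 2] :=
            Nat.ModEq.mul h1 (hη_mod_compl hgl)
        _ = 1 := one_mul 1
    have h2' : t * η ≡ 1 [MOD 2 ^ g.factorization 2] := by
      calc t * η ≡ (2 ^ g.factorization 2 - 1) * (2 ^ g.factorization 2 - 1)
            [MOD 2 ^ g.factorization 2] := Nat.ModEq.mul h2 (hη_mod_pow hgl)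
        _ ≡ 1 [MOD 2 ^ g.factorization 2] := sq_pred_modEq (by positivity)
    obtain ⟨b', c, hb'co, hcco, hbc', hb', hc⟩ :=
      nat_split hd he (t * η) hco' (modEq_of_parts h2' h1' hg)
    refine ⟨b' * η, c, hb'co.mul hηco, hcco, ?_, ?_, Or.inr ?_, hc⟩
    · calc b' * η * c = b' * c * η := by ring
        _ ≡ t * η * η [MOD l] := Nat.ModEq.mul_right η hbc'
        _ = t * (η * η) := by ring
        _ ≡ t * 1 [MOD l] := Nat.ModEq.mul_left t hηsq
        _ = t := mul_one t
    · calc b' * η ≡ 1 * 1 [MOD d / 2 ^ d.factorization 2] :=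
          Nat.ModEq.mul (hb'.of_dvd (Nat.ordCompl_dvd d 2)) (hη_mod_compl hdl)
        _ = 1 := one_mul 1
    · calc b' * η ≡ 1 * (2 ^ d.factorization 2 - 1) [MOD 2 ^ d.factorization 2] :=
          Nat.ModEq.mul (hb'.of_dvd (Nat.ordProj_dvd d 2)) (hη_mod_pow hdl)
        _ = 2 ^ d.factorization 2 - 1 := one_mul _




lemma mem_fixedField_iff {F E : Type*} [Field F] [Field E] [Algebra F E]
    {H : Subgroup (E ≃ₐ[F] E)} {x : E} :
    x ∈ IntermediateField.fixedField H ↔ ∀ σ : H, (σ : E ≃ₐ[F] E) x = x :=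
  Iff.rfl

set_option maxHeartbeats 1000000 in
lemma master {d e : ℕ} (hd : d ≠ 0) (he : e ≠ 0) {x : ℂ}
    (hxd : x ∈ EcycP d) (hxe : x ∈ Ecyc e) : x ∈ EcycP (Nat.gcd d e) := by
  have hl : Nat.lcm d e ≠ 0 := Nat.lcm_ne_zero hd he
  set l := Nat.lcm d e with hldef
  set g := Nat.gcd d e with hgdef
  have hg : g ≠ 0 := Nat.gcd_ne_zero_left hd
  have hdl : d ∣ l := Nat.dvd_lcm_left d e
  have hel : e ∣ l := Nat.dvd_lcm_right d e
  have hgd : g ∣ d := Nat.gcd_dvd_left d e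
  have hgl : g ∣ l := hgd.trans hdl
  letI : NeZero l := ⟨hl⟩
  letI := Ecyc_isCyclo hl
  letI : FiniteDimensional ℚ ↥(Ecyc l) :=
    IsCyclotomicExtension.finiteDimensional {l} ℚ ↥(Ecyc l)
  letI : IsGalois ℚ ↥(Ecyc l) :=
    IsCyclotomicExtension.isGalois {l} ℚ ↥(Ecyc l)
  have irr : Irreducible (Polynomial.cyclotomic ((⟨l, Nat.pos_of_ne_zero hl⟩ : ℕ+) : ℕ) ℚ) :=
    Polynomial.cyclotomic.irreducible_rat (Nat.pos_of_ne_zero hl)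
  set ψ := IsCyclotomicExtension.autEquivPow (n := l)
    ↥(Ecyc l) irr with hψdef
  set aN : (↥(Ecyc l) ≃ₐ[ℚ] ↥(Ecyc l)) → ℕ :=
    fun σ => ((ψ σ).val).val with haN
  have hζ : IsPrimitiveRoot (zL l) l := zL_prim hl
  have hcoN : ∀ σ, (aN σ).Coprime l := fun σ => ZMod.val_coe_unit_coprime (ψ σ)
  -- the action of an automorphism on the primitive root
  have hact0 : ∀ σ : ↥(Ecyc l) ≃ₐ[ℚ] ↥(Ecyc l), σ (zL l) = zL l ^ aN σ := by
    intro σ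
    have hz := IsCyclotomicExtension.zeta_spec l ℚ ↥(Ecyc l)
    obtain ⟨i, hi, hiz⟩ := hz.eq_pow_of_pow_eq_one hζ.pow_eq_one
    have hspec := hz.autToPow_spec ℚ σ
    have hψσ : ψ σ = hz.autToPow ℚ σ := by rw [hψdef]; rfl
    calc σ (zL l) = σ (IsCyclotomicExtension.zeta _ ℚ ↥(Ecyc l) ^ i) := by rw [hiz]
      _ = (σ (IsCyclotomicExtension.zeta _ ℚ ↥(Ecyc l))) ^ i := map_pow σ _ i
      _ = (IsCyclotomicExtension.zeta _ ℚ ↥(Ecyc l) ^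
            ((hz.autToPow ℚ σ).val).val) ^ i := by rw [hspec]
      _ = (IsCyclotomicExtension.zeta _ ℚ ↥(Ecyc l) ^ i) ^
            ((hz.autToPow ℚ σ).val).val := by rw [← pow_mul, ← pow_mul, mul_comm]
      _ = zL l ^ aN σ := by rw [hiz]; simp only [haN, hψσ]
  have hact : ∀ (σ : ↥(Ecyc l) ≃ₐ[ℚ] ↥(Ecyc l)) (k : ℕ),
      σ (zL l ^ k) = (zL l ^ k) ^ aN σ := by
    intro σ k
    rw [map_pow, hact0, ← pow_mul, ← pow_mul, mul_comm]
  have hprim : ∀ {u : ℕ}, u ∣ l → u ≠ 0 → IsPrimitiveRoot (zL l ^ (l / u)) u := by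
    intro u hu hu0
    exact hζ.pow (Nat.pos_of_ne_zero hl) (Nat.div_mul_cancel hu).symm
  have hfixpow : ∀ (σ : ↥(Ecyc l) ≃ₐ[ℚ] ↥(Ecyc l)) {u : ℕ}, u ∣ l → u ≠ 0 →
      (σ (zL l ^ (l / u)) = zL l ^ (l / u) ↔ aN σ ≡ 1 [MOD u]) := by
    intro σ u hu hu0
    rw [hact σ (l / u)]
    nth_rewrite 2 [show zL l ^ (l / u) = (zL l ^ (l / u)) ^ 1 from (pow_one _).symm]
    exact prim_pow_eq_pow_iff hu0 (hprim hu hu0) _ 1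
  have hfixc : ∀ (σ : ↥(Ecyc l) ≃ₐ[ℚ] ↥(Ecyc l)) {j : ℕ}, 2 ^ j ∣ l →
      ((σ (zL l ^ (l / 2 ^ j) + (zL l ^ (l / 2 ^ j))⁻¹) =
        zL l ^ (l / 2 ^ j) + (zL l ^ (l / 2 ^ j))⁻¹) ↔
      (aN σ ≡ 1 [MOD 2 ^ j] ∨ aN σ ≡ 2 ^ j - 1 [MOD 2 ^ j])) := by
    intro σ j hj
    have hj0 : (2:ℕ) ^ j ≠ 0 := by positivity
    set w : ↥(Ecyc l) := zL l ^ (l / 2 ^ j) with hwdef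
    have hw : IsPrimitiveRoot w (2 ^ j) := hprim hj hj0
    have hw0 : w ≠ 0 := hw.ne_zero hj0
    have hwt0 : w ^ aN σ ≠ 0 := pow_ne_zero _ hw0
    have hlhs : σ (w + w⁻¹) = w ^ aN σ + (w ^ aN σ)⁻¹ := by
      rw [map_add, map_inv₀, hwdef, hact σ (l / 2 ^ j)]
    have hinv : w⁻¹ = w ^ (2 ^ j - 1) := by
      refine inv_eq_of_mul_eq_one_right ?_
      have h1 : w * w ^ (2 ^ j - 1) = w ^ (2 ^ j - 1 + 1) := (pow_succ' w _).symm
      have h2 : 2 ^ j - 1 + 1 = 2 ^ j := by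
        have := Nat.one_le_two_pow (n := j); omega
      rw [h1, h2, hw.pow_eq_one]
    have hiden : (w ^ aN σ - w) * (w ^ aN σ - w⁻¹) =
        w ^ aN σ * ((w ^ aN σ + (w ^ aN σ)⁻¹) - (w + w⁻¹)) := by
      field_simp
      ring
    rw [hlhs]
    constructor
    · intro h
      have hz : (w ^ aN σ - w) * (w ^ aN σ - w⁻¹) = 0 := by
        rw [hiden, h, sub_self, mul_zero]
      rcases mul_eq_zero.1 hz with h' | h'
      · left
        have : w ^ aN σ = w ^ 1 := by rw [pow_one]; exact sub_eq_zero.1 h'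
        exact (prim_pow_eq_pow_iff hj0 hw _ 1).1 this
      · right
        have : w ^ aN σ = w ^ (2 ^ j - 1) := by rw [← hinv]; exact sub_eq_zero.1 h'
        exact (prim_pow_eq_pow_iff hj0 hw _ _).1 this
    · intro h
      rcases h with h | h
      · have : w ^ aN σ = w ^ 1 := (prim_pow_eq_pow_iff hj0 hw _ 1).2 h
        rw [this, pow_one]
      · have : w ^ aN σ = w ^ (2 ^ j - 1) := (prim_pow_eq_pow_iff hj0 hw _ _).2 h
        rw [this, ← hinv, inv_inv, add_comm]
  have hval : ∀ k : ℕ, (Ecyc l).val (zL l ^ k) = zetaC l ^ k := by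
    intro k; rw [map_pow]; rfl
  have hmem_map : ∀ (S : Set ↥(Ecyc l)) (hx : x ∈ Ecyc l),
      (x ∈ IntermediateField.map (Ecyc l).val (IntermediateField.adjoin ℚ S) ↔
        (⟨x, hx⟩ : ↥(Ecyc l)) ∈ IntermediateField.adjoin ℚ S) := by
    intro S hx
    constructor
    · rintro ⟨y, hy, hyx⟩
      have : y = (⟨x, hx⟩ : ↥(Ecyc l)) := Subtype.ext hyx
      rwa [this] at hy
    · intro h
      exact ⟨⟨x, hx⟩, h, rfl⟩
  have hxl : x ∈ Ecyc l := Ecyc_mono hd hl hdl (EcycP_le_Ecyc hd hxd)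
  have hEu : ∀ {u : ℕ}, u ∣ l → u ≠ 0 →
      Ecyc u = IntermediateField.map (Ecyc l).val
        (IntermediateField.adjoin ℚ {zL l ^ (l / u)}) := by
    intro u hu hu0
    rw [IntermediateField.adjoin_map, Set.image_singleton, hval, zetaC_pow_eq hu0 hu hl, Ecyc]
  have hEPu : ∀ {u : ℕ}, u ∣ l → u ≠ 0 → 3 ≤ u.factorization 2 →
      EcycP u = IntermediateField.map (Ecyc l).val
        (IntermediateField.adjoin ℚ
          {zL l ^ (l / 2 ^ u.factorization 2) + (zL l ^ (l / 2 ^ u.factorization 2))⁻¹,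
            zL l ^ (l / (u / 2 ^ u.factorization 2))}) := by
    intro u hu hu0 h3
    have hpu : (2:ℕ) ^ u.factorization 2 ∣ l := (Nat.ordProj_dvd u 2).trans hu
    have hmu : u / 2 ^ u.factorization 2 ∣ l := (Nat.ordCompl_dvd u 2).trans hu
    have hmu0 : u / 2 ^ u.factorization 2 ≠ 0 := (Nat.ordCompl_pos 2 hu0).ne'
    rw [IntermediateField.adjoin_map, Set.image_pair]
    rw [map_add, map_inv₀, hval, hval, zetaC_pow_eq (by positivity) hpu hl,
      zetaC_pow_eq hmu0 hmu hl]
    rw [EcycP, if_pos h3, Ecyc, ← IntermediateField.adjoin_union, Set.singleton_union]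
  have hEPu' : ∀ {u : ℕ}, u ∣ l → u ≠ 0 → ¬ (3 ≤ u.factorization 2) →
      EcycP u = IntermediateField.map (Ecyc l).val
        (IntermediateField.adjoin ℚ {zL l ^ (l / (u / 2 ^ u.factorization 2))}) := by
    intro u hu hu0 h3
    have hmu : u / 2 ^ u.factorization 2 ∣ l := (Nat.ordCompl_dvd u 2).trans hu
    have hmu0 : u / 2 ^ u.factorization 2 ≠ 0 := (Nat.ordCompl_pos 2 hu0).ne'
    rw [EcycP, if_neg h3, hEu hmu hmu0]
  have hfixd : ∀ σ : ↥(Ecyc l) ≃ₐ[ℚ] ↥(Ecyc l),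
      aN σ ≡ 1 [MOD d / 2 ^ d.factorization 2] →
      (aN σ ≡ 1 [MOD 2 ^ d.factorization 2] ∨
        aN σ ≡ 2 ^ d.factorization 2 - 1 [MOD 2 ^ d.factorization 2]) →
      σ ⟨x, hxl⟩ = ⟨x, hxl⟩ := by
    intro σ hm h2
    have hpu : (2:ℕ) ^ d.factorization 2 ∣ l := (Nat.ordProj_dvd d 2).trans hdl
    have hmu : d / 2 ^ d.factorization 2 ∣ l := (Nat.ordCompl_dvd d 2).trans hdl
    have hmu0 : d / 2 ^ d.factorization 2 ≠ 0 := (Nat.ordCompl_pos 2 hd).ne'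
    by_cases h3 : 3 ≤ d.factorization 2
    · have hX : (⟨x, hxl⟩ : ↥(Ecyc l)) ∈ IntermediateField.adjoin ℚ
          {zL l ^ (l / 2 ^ d.factorization 2) + (zL l ^ (l / 2 ^ d.factorization 2))⁻¹,
            zL l ^ (l / (d / 2 ^ d.factorization 2))} := by
        rw [← hmem_map _ hxl, ← hEPu hdl hd h3]; exact hxd
      refine fix_adjoin ?_ hX
      intro s hs
      simp only [Set.mem_insert_iff, Set.mem_singleton_iff] at hs
      rcases hs with rfl | rfl
      · exact (hfixc σ hpu).2 h2
      · exact (hfixpow σ hmu hmu0).2 hm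
    · have hX : (⟨x, hxl⟩ : ↥(Ecyc l)) ∈ IntermediateField.adjoin ℚ
          {zL l ^ (l / (d / 2 ^ d.factorization 2))} := by
        rw [← hmem_map _ hxl, ← hEPu' hdl hd h3]; exact hxd
      refine fix_adjoin ?_ hX
      intro s hs
      simp only [Set.mem_singleton_iff] at hs
      subst hs
      exact (hfixpow σ hmu hmu0).2 hm
  have hfixe : ∀ σ : ↥(Ecyc l) ≃ₐ[ℚ] ↥(Ecyc l), aN σ ≡ 1 [MOD e] →
      σ ⟨x, hxl⟩ = ⟨x, hxl⟩ := by
    intro σ hm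
    have hX : (⟨x, hxl⟩ : ↥(Ecyc l)) ∈ IntermediateField.adjoin ℚ {zL l ^ (l / e)} := by
      rw [← hmem_map _ hxl, ← hEu hel he]; exact hxe
    refine fix_adjoin ?_ hX
    intro s hs
    simp only [Set.mem_singleton_iff] at hs
    subst hs
    exact (hfixpow σ hel he).2 hm
  have hkey : ∀ σ : ↥(Ecyc l) ≃ₐ[ℚ] ↥(Ecyc l),
      aN σ ≡ 1 [MOD g / 2 ^ g.factorization 2] →
      (aN σ ≡ 1 [MOD 2 ^ g.factorization 2] ∨
        aN σ ≡ 2 ^ g.factorization 2 - 1 [MOD 2 ^ g.factorization 2]) →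
      σ ⟨x, hxl⟩ = ⟨x, hxl⟩ := by
    intro σ h1 h2
    obtain ⟨b, c, hbco, hcco, hbc, hbm, hb2, hce⟩ := arith hd he (aN σ) (hcoN σ) h1 h2
    set B : (ZMod l)ˣ := ZMod.unitOfCoprime b hbco with hBdef
    set C : (ZMod l)ˣ := ZMod.unitOfCoprime c hcco with hCdef
    have hBC : B * C = ψ σ := by
      refine Units.ext ?_
      rw [Units.val_mul, hBdef, hCdef, ZMod.coe_unitOfCoprime, ZMod.coe_unitOfCoprime,
        ← Nat.cast_mul, (ZMod.natCast_eq_natCast_iff _ _ _).2 hbc]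
      show ((aN σ : ℕ) : ZMod l) = (ψ σ).val
      rw [haN]
      rw [ZMod.natCast_val, ZMod.cast_id]
    set τ := ψ.symm B with hτdef
    set ρ := ψ.symm C with hρdef
    have hστρ : σ = τ * ρ := by
      have hmm : ψ.symm (B * C) = ψ.symm B * ψ.symm C := map_mul ψ.symm B C
      rw [hτdef, hρdef, ← hmm, hBC, MulEquiv.symm_apply_apply]
    have haτ : aN τ ≡ b [MOD l] := by
      rw [haN]
      show ((ψ (ψ.symm B)).val).val ≡ b [MOD l]
      rw [MulEquiv.apply_symm_apply, hBdef, ZMod.coe_unitOfCoprime, ZMod.val_natCast]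
      exact Nat.mod_modEq b l
    have haρ : aN ρ ≡ c [MOD l] := by
      rw [haN]
      show ((ψ (ψ.symm C)).val).val ≡ c [MOD l]
      rw [MulEquiv.apply_symm_apply, hCdef, ZMod.coe_unitOfCoprime, ZMod.val_natCast]
      exact Nat.mod_modEq c l
    have hmdl : d / 2 ^ d.factorization 2 ∣ l := (Nat.ordCompl_dvd d 2).trans hdl
    have hpdl : (2:ℕ) ^ d.factorization 2 ∣ l := (Nat.ordProj_dvd d 2).trans hdl
    have hτfix : τ ⟨x, hxl⟩ = ⟨x, hxl⟩ := by
      refine hfixd τ ((haτ.of_dvd hmdl).trans hbm) ?_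
      rcases hb2 with hb2 | hb2
      · exact Or.inl ((haτ.of_dvd hpdl).trans hb2)
      · exact Or.inr ((haτ.of_dvd hpdl).trans hb2)
    have hρfix : ρ ⟨x, hxl⟩ = ⟨x, hxl⟩ := hfixe ρ ((haρ.of_dvd hel).trans hce)
    rw [hστρ, AlgEquiv.mul_apply, hρfix, hτfix]
  have hauto : ∀ σ : ↥(Ecyc l) ≃ₐ[ℚ] ↥(Ecyc l), ¬ (3 ≤ g.factorization 2) →
      (aN σ ≡ 1 [MOD 2 ^ g.factorization 2] ∨
        aN σ ≡ 2 ^ g.factorization 2 - 1 [MOD 2 ^ g.factorization 2]) := by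
    intro σ h3
    have hodd : 2 ∣ l → aN σ % 2 = 1 := by
      intro h2l
      have hco2 : Nat.Coprime 2 (aN σ) := ((hcoN σ).coprime_dvd_right h2l).symm
      have hnot := (Nat.Prime.coprime_iff_not_dvd Nat.prime_two).1 hco2
      rcases Nat.mod_two_eq_zero_or_one (aN σ) with hh | hh
      · exact absurd (Nat.dvd_of_mod_eq_zero hh) hnot
      · exact hh
    have hcases : g.factorization 2 = 0 ∨ g.factorization 2 = 1 ∨ g.factorization 2 = 2 := by
      omega
    rcases hcases with hj | hj | hj <;> rw [hj]
    · left; exact Nat.modEq_one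
    · left
      have h2l : (2:ℕ) ∣ l := by
        have h2g : (2:ℕ) ^ g.factorization 2 ∣ g := Nat.ordProj_dvd g 2
        rw [hj, pow_one] at h2g
        exact h2g.trans hgl
      have := hodd h2l
      rw [pow_one]
      show aN σ % 2 = 1 % 2
      omega
    · have h4l : (2:ℕ) ^ 2 ∣ l := by
        have h4g : (2:ℕ) ^ g.factorization 2 ∣ g := Nat.ordProj_dvd g 2
        rw [hj] at h4g
        exact h4g.trans hgl
      have h2l : (2:ℕ) ∣ l := dvd_trans (by norm_num) h4l
      have hodd' := hodd h2l
      have h14 := Nat.odd_mod_four_iff.1 hodd'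
      rw [show (2:ℕ) ^ 2 = 4 by norm_num]
      rcases h14 with h' | h'
      · left; show aN σ % 4 = 1 % 4; omega
      · right; show aN σ % 4 = (4 - 1) % 4; omega
  -- conclusion
  have hmgl : g / 2 ^ g.factorization 2 ∣ l := (Nat.ordCompl_dvd g 2).trans hgl
  have hmg0 : g / 2 ^ g.factorization 2 ≠ 0 := (Nat.ordCompl_pos 2 hg).ne'
  have hpgl : (2:ℕ) ^ g.factorization 2 ∣ l := (Nat.ordProj_dvd g 2).trans hgl
  by_cases h3 : 3 ≤ g.factorization 2
  · rw [hEPu hgl hg h3, hmem_map _ hxl]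
    set S : Set ↥(Ecyc l) :=
      {zL l ^ (l / 2 ^ g.factorization 2) + (zL l ^ (l / 2 ^ g.factorization 2))⁻¹,
        zL l ^ (l / (g / 2 ^ g.factorization 2))} with hSdef
    rw [← IsGalois.fixedField_fixingSubgroup (IntermediateField.adjoin ℚ S),
      _root_.mem_fixedField_iff]
    intro σ
    have hfix := (IntermediateField.mem_fixingSubgroup_iff _ (σ : ↥(Ecyc l) ≃ₐ[ℚ] ↥(Ecyc l))).1 σ.2
    refine hkey σ ?_ ?_
    · refine (hfixpow σ hmgl hmg0).1 ?_
      exact hfix _ (IntermediateField.subset_adjoin ℚ S (by rw [hSdef]; right; rfl))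
    · refine (hfixc σ hpgl).1 ?_
      exact hfix _ (IntermediateField.subset_adjoin ℚ S (by rw [hSdef]; left; rfl))
  · rw [hEPu' hgl hg h3, hmem_map _ hxl]
    set S : Set ↥(Ecyc l) := {zL l ^ (l / (g / 2 ^ g.factorization 2))} with hSdef
    rw [← IsGalois.fixedField_fixingSubgroup (IntermediateField.adjoin ℚ S),
      _root_.mem_fixedField_iff]
    intro σ
    have hfix := (IntermediateField.mem_fixingSubgroup_iff _ (σ : ↥(Ecyc l) ≃ₐ[ℚ] ↥(Ecyc l))).1 σ.2
    refine hkey σ ?_ (hauto σ h3)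
    refine (hfixpow σ hmgl hmg0).1 ?_
    exact hfix _ (IntermediateField.subset_adjoin ℚ S rfl)




end StmtAux

/-- For a subfield `K` of the algebraic numbers and `n ∈ ℕ` with
`𝔇_K^+(n) ≠ ∅`: `c_K^+(n) ∈ 𝔇_K^+(n)`, `c_K^+(n)` is the minimum of `𝔇_K^+(n)`,
`𝔇_K^+(n)` is the set of positive multiples of `c_K^+(n)`, and `c_K^+(n) ∣ n`. -/
theorem stmt_8 (K : IntermediateField ℚ ℂ) (hK : ∀ x ∈ K, IsAlgebraic ℚ x)
    (n : ℕ) (hn : 0 < n) (hne : (DsetP K n).Nonempty) :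
    cKP K n ∈ DsetP K n ∧
    IsLeast (DsetP K n) (cKP K n) ∧
    DsetP K n = {d : ℕ | ∃ k : ℕ, 0 < k ∧ d = cKP K n * k} ∧
    cKP K n ∣ n := by
  set D := DsetP K n with hDdef
  set m := sInf D with hmdef
  have hmD : m ∈ D := Nat.sInf_mem hne
  have hm0 : 0 < m := hmD.1
  -- every field that contains K ⊓ Ecyc n and is of the form Ecyc e has index divisible by m
  have hdiv' : ∀ e : ℕ, e ≠ 0 → K ⊓ Ecyc n ≤ Ecyc e → m ∣ e := by
    intro e he0 hle
    have hgcd : Nat.gcd m e ∈ D := by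
      refine ⟨Nat.pos_of_ne_zero (Nat.gcd_ne_zero_left hm0.ne'), ?_⟩
      intro x hx
      exact master hm0.ne' he0 (hmD.2 hx) (hle hx)
    have h1 : m ≤ Nat.gcd m e := Nat.sInf_le hgcd
    have h2 : Nat.gcd m e ≤ m := Nat.le_of_dvd hm0 (Nat.gcd_dvd_left m e)
    have h3 : Nat.gcd m e = m := le_antisymm h2 h1
    rw [← h3]
    exact Nat.gcd_dvd_right m e
  have hdiv : ∀ d ∈ D, m ∣ d := by
    intro d hd
    exact hdiv' d hd.1.ne' (le_trans hd.2 (EcycP_le_Ecyc hd.1.ne'))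
  have hup : ∀ d : ℕ, 0 < d → m ∣ d → d ∈ D := by
    intro d hd0 hmd
    exact ⟨hd0, le_trans hmD.2 (EcycP_mono hm0.ne' hd0.ne' hmd)⟩
  -- the gcd of D is m
  have hc : cKP K n = m := by
    have hTm : m ∈ {g : ℕ | ∀ s ∈ D, g ∣ s} := fun s hs => hdiv s hs
    have hbdd : ∀ g ∈ {g : ℕ | ∀ s ∈ D, g ∣ s}, g ≤ m :=
      fun g hg => Nat.le_of_dvd hm0 (hg m hmD)
    refine le_antisymm ?_ ?_
    · exact csSup_le ⟨m, hTm⟩ hbdd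
    · exact le_csSup ⟨m, hbdd⟩ hTm
  rw [hc]
  refine ⟨hmD, ⟨hmD, fun d hd => Nat.le_of_dvd hd.1 (hdiv d hd)⟩, ?_, ?_⟩
  · ext d
    constructor
    · intro hd
      obtain ⟨k, rfl⟩ := hdiv d hd
      have hk0 : 0 < k := by
        rcases Nat.eq_zero_or_pos k with rfl | h
        · simp at hd
          exact absurd hd.1 (by omega)
        · exact h
      exact ⟨k, hk0, rfl⟩
    · rintro ⟨k, hk0, rfl⟩
      exact hup _ (Nat.mul_pos hm0 hk0) (Dvd.intro k rfl)
  · exact hdiv' n hn.ne' inf_le_right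
end
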